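/- For every real inner product on su(2) there exists a normalized frame: an orthonormal basis X₁, X₂, X₃ of su(2) and real numbers λ₁, λ₂, λ₃ such that [X₂, X₃] = λ₁ X₁, [X₃, X₁] = λ₂ X₂, and [X₁, X₂] = λ₃ X₃. -/

import Mathlib

open Matrix BigOperators

noncomputable def suPhi : (Fin 3 → ℝ) →ₗ[ℝ] Matrix (Fin 2) (Fin 2) ℂ where
  toFun v := !![(v 0 : ℂ) * Complex.I, (v 1 : ℂ) + (v 2 : ℂ) * Complex.I;
                -(v 1 : ℂ) + (v 2 : ℂ) * Complex.I, -(v 0 : ℂ) * Complex.I]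
  map_add' u v := by
    ext i j; fin_cases i <;> fin_cases j <;> simp [Matrix.add_apply] <;> ring
  map_smul' r v := by
    ext i j; fin_cases i <;> fin_cases j <;>
      simp [Matrix.smul_apply, Complex.real_smul] <;> ring

lemma suPhi_skew (v : Fin 3 → ℝ) : (suPhi v)ᴴ = -(suPhi v) := by
  ext i j; fin_cases i <;> fin_cases j <;>
    simp [suPhi, Matrix.conjTranspose_apply, Complex.ext_iff]

lemma suPhi_trace (v : Fin 3 → ℝ) : (suPhi v).trace = 0 := by
  rw [Matrix.trace_fin_two]
  simp [suPhi]

lemma suPhi_inj {v : Fin 3 → ℝ} (h : suPhi v = 0) : v = 0 := by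
  have h00 := congrFun (congrFun h 0) 0
  have h01 := congrFun (congrFun h 0) 1
  simp [suPhi, Complex.ext_iff] at h00 h01
  funext k; fin_cases k
  · simpa using h00
  · simpa using h01.1
  · simpa using h01.2

lemma suPhi_surj {A : Matrix (Fin 2) (Fin 2) ℂ} (hA : Aᴴ = -A) (ht : A.trace = 0) :
    suPhi ![(A 0 0).im, (A 0 1).re, (A 0 1).im] = A := by
  have h00 := congrFun (congrFun hA 0) 0
  have h10 := congrFun (congrFun hA 1) 0
  have h11 : A 1 1 = -A 0 0 := by rw [Matrix.trace_fin_two] at ht; linear_combination ht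
  rw [Matrix.conjTranspose_apply, Matrix.neg_apply] at h00 h10
  have hre : (A 0 0).re = 0 := by
    have := congrArg Complex.re h00; simp at this; linarith
  have h10' : A 1 0 = -star (A 0 1) := by linear_combination h10
  ext i j
  fin_cases i <;> fin_cases j <;> simp [suPhi, h11, h10', Complex.ext_iff, hre]

lemma suPhi_bracket (u v : Fin 3 → ℝ) :
    suPhi u * suPhi v - suPhi v * suPhi u = suPhi ((2:ℝ) • (crossProduct u v)) := by
  ext i j; fin_cases i <;> fin_cases j <;>
    simp [suPhi, Matrix.mul_apply, Fin.sum_univ_two, crossProduct, Complex.ext_iff] <;>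
    ring_nf <;> simp

theorem exists_normalized_frame
    (B : Matrix (Fin 2) (Fin 2) ℂ →ₗ[ℝ] Matrix (Fin 2) (Fin 2) ℂ →ₗ[ℝ] ℝ)
    (hsymm : ∀ A A' : Matrix (Fin 2) (Fin 2) ℂ, B A A' = B A' A)
    (hpos : ∀ A : Matrix (Fin 2) (Fin 2) ℂ, Aᴴ = -A → A.trace = 0 → A ≠ 0 → 0 < B A A) :
    ∃ X : Fin 3 → Matrix (Fin 2) (Fin 2) ℂ,
      (∀ i, (X i)ᴴ = -X i ∧ (X i).trace = 0) ∧
      LinearIndependent ℝ X ∧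
      (∀ A : Matrix (Fin 2) (Fin 2) ℂ, Aᴴ = -A → A.trace = 0 →
        A ∈ Submodule.span ℝ (Set.range X)) ∧
      (∀ i j, B (X i) (X j) = if i = j then 1 else 0) ∧
      ∃ l₁ l₂ l₃ : ℝ,
        X 1 * X 2 - X 2 * X 1 = l₁ • X 0 ∧
        X 2 * X 0 - X 0 * X 2 = l₂ • X 1 ∧
        X 0 * X 1 - X 1 * X 0 = l₃ • X 2 := by
  classical
  set δ : Fin 3 → (Fin 3 → ℝ) := fun i k => if k = i then 1 else 0 with hδ
  set E : Fin 3 → Matrix (Fin 2) (Fin 2) ℂ := fun i => suPhi (δ i) with hE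
  have hrep : ∀ v : Fin 3 → ℝ, suPhi v = v 0 • E 0 + v 1 • E 1 + v 2 • E 2 := by
    intro v
    have hv : (v 0 • δ 0 + v 1 • δ 1 + v 2 • δ 2 : Fin 3 → ℝ) = v := by
      funext k; fin_cases k <;> simp [hδ]
    rw [hE]
    simp only [← _root_.map_smul, ← map_add, hv]
  set G : Matrix (Fin 3) (Fin 3) ℝ := Matrix.of (fun i j => B (E i) (E j)) with hG
  have hB : ∀ u v : Fin 3 → ℝ, B (suPhi u) (suPhi v) = u ⬝ᵥ (G *ᵥ v) := by
    intro u v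
    rw [hrep u, hrep v]
    simp [map_add, _root_.map_smul, LinearMap.add_apply, LinearMap.smul_apply, hG,
      dotProduct, Matrix.mulVec, Fin.sum_univ_three, smul_eq_mul]
    ring
  have hGsym : G.IsHermitian := by
    ext i j
    simp [Matrix.IsHermitian, Matrix.conjTranspose_apply, hG, hsymm (E j) (E i)]
  have hGpd : G.PosDef := by
    refine Matrix.PosDef.of_dotProduct_mulVec_pos hGsym fun x hx => ?_
    have h1 : suPhi x ≠ 0 := fun h => hx (suPhi_inj h)
    have h2 := hpos (suPhi x) (suPhi_skew x) (suPhi_trace x) h1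
    rw [hB x x] at h2
    simpa using h2
  set μ : Fin 3 → ℝ := hGsym.eigenvalues with hμ
  set q := hGsym.eigenvectorBasis with hq
  set qf : Fin 3 → (Fin 3 → ℝ) := fun i k => q i k with hqf
  have hμpos : ∀ i, 0 < μ i := fun i => hGpd.eigenvalues_pos i
  have hqo : ∀ i j, qf i ⬝ᵥ qf j = if i = j then 1 else 0 := by
    intro i j
    have h := orthonormal_iff_ite.mp q.orthonormal i j
    rw [PiLp.inner_apply] at h
    simpa [RCLike.inner_apply, dotProduct, hqf, mul_comm] using h
  have hmulvec : ∀ j, G *ᵥ qf j = μ j • qf j := fun j => hGsym.mulVec_eigenvectorBasis j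
  have hcomp : ∀ a b, (∑ k, qf k a * qf k b) = if a = b then (1:ℝ) else 0 := by
    set Q : Matrix (Fin 3) (Fin 3) ℝ := Matrix.of (fun i k => qf i k) with hQdef
    have hQ : Q * Qᵀ = 1 := by
      ext i j
      simpa [hQdef, Matrix.mul_apply, Matrix.transpose_apply, Matrix.one_apply,
        dotProduct] using hqo i j
    have h2 : Qᵀ * Q = 1 := mul_eq_one_comm.mp hQ
    intro a b
    have h3 := congrFun (congrFun h2 a) b
    simpa [hQdef, Matrix.mul_apply, Matrix.transpose_apply, Matrix.one_apply,
      mul_comm] using h3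
  have hexp : ∀ v : Fin 3 → ℝ, (∑ k, ((qf k ⬝ᵥ v) • qf k : Fin 3 → ℝ)) = v := by
    intro v; funext a
    have h1 : (∑ k, ((qf k ⬝ᵥ v) • qf k : Fin 3 → ℝ)) a
        = ∑ i, (∑ k, qf k a * qf k i) * v i := by
      simp only [Finset.sum_apply, Pi.smul_apply, smul_eq_mul, dotProduct,
        Finset.mul_sum, Finset.sum_mul]
      rw [Finset.sum_comm]
      exact Finset.sum_congr rfl fun i _ => Finset.sum_congr rfl fun k _ => by ring
    rw [h1]
    simp [hcomp]
  set c : Fin 3 → ℝ := fun i => (Real.sqrt (μ i))⁻¹ with hc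
  have hs0 : ∀ i, Real.sqrt (μ i) ≠ 0 := fun i => ne_of_gt (Real.sqrt_pos.mpr (hμpos i))
  have hc0 : ∀ i, c i ≠ 0 := fun i => inv_ne_zero (hs0 i)
  have hcc : ∀ i, c i * c i * μ i = 1 := by
    intro i
    have h : c i = (Real.sqrt (μ i))⁻¹ := rfl
    rw [h]
    field_simp
    rw [Real.sq_sqrt (le_of_lt (hμpos i)), div_self (ne_of_gt (hμpos i))]
  set p : Fin 3 → (Fin 3 → ℝ) := fun i => c i • qf i with hp
  set X : Fin 3 → Matrix (Fin 2) (Fin 2) ℂ := fun i => suPhi (p i) with hX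
  have hXdef : ∀ i, X i = suPhi (c i • qf i) := fun i => rfl
  have hXq : ∀ k, suPhi (qf k) = (c k)⁻¹ • X k := by
    intro k
    rw [hXdef, _root_.map_smul, inv_smul_smul₀ (hc0 k)]
  have horth : ∀ i j, B (X i) (X j) = if i = j then 1 else 0 := by
    intro i j
    rw [hXdef, hXdef, hB]
    rw [Matrix.mulVec_smul, hmulvec, smul_dotProduct, dotProduct_smul,
      dotProduct_smul, hqo, smul_eq_mul, smul_eq_mul, smul_eq_mul]
    by_cases h : i = j
    · subst h; simp; linear_combination hcc i
    · simp [h]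
  refine ⟨X, fun i => ⟨suPhi_skew _, suPhi_trace _⟩, ?_, ?_, horth, ?_⟩
  · rw [Fintype.linearIndependent_iff]
    intro g hg i
    have h := congrArg (fun M => B M (X i)) hg
    simpa [map_sum, LinearMap.sum_apply, _root_.map_smul, LinearMap.smul_apply, horth,
      Finset.sum_ite_eq'] using h
  · intro A hA ht
    rw [← suPhi_surj hA ht, ← hexp ![(A 0 0).im, (A 0 1).re, (A 0 1).im], map_sum]
    apply Submodule.sum_mem
    intro k _
    rw [_root_.map_smul, hXq k]
    exact Submodule.smul_mem _ _ (Submodule.smul_mem _ _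
      (Submodule.subset_span ⟨k, rfl⟩))
  · have hcrs : ∀ i j, crossProduct (c i • qf i) (c j • qf j)
        = (c i * c j) • crossProduct (qf i) (qf j) := by
      intro i j
      simp [LinearMap.map_smul₂, _root_.map_smul, smul_smul, mul_comm]
    have hc01 : crossProduct (qf 0) (qf 1)
        = (qf 2 ⬝ᵥ crossProduct (qf 0) (qf 1)) • qf 2 := by
      have h := hexp (crossProduct (qf 0) (qf 1))
      rw [Fin.sum_univ_three, dot_self_cross, dot_cross_self] at h
      simpa using h.symm
    have hc12 : crossProduct (qf 1) (qf 2)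
        = (qf 0 ⬝ᵥ crossProduct (qf 1) (qf 2)) • qf 0 := by
      have h := hexp (crossProduct (qf 1) (qf 2))
      rw [Fin.sum_univ_three, dot_self_cross, dot_cross_self] at h
      simpa using h.symm
    have hc20 : crossProduct (qf 2) (qf 0)
        = (qf 1 ⬝ᵥ crossProduct (qf 2) (qf 0)) • qf 1 := by
      have h := hexp (crossProduct (qf 2) (qf 0))
      rw [Fin.sum_univ_three, dot_self_cross, dot_cross_self] at h
      simpa using h.symm
    refine ⟨2 * (c 1 * c 2) * (qf 0 ⬝ᵥ crossProduct (qf 1) (qf 2)) * (c 0)⁻¹,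
      2 * (c 2 * c 0) * (qf 1 ⬝ᵥ crossProduct (qf 2) (qf 0)) * (c 1)⁻¹,
      2 * (c 0 * c 1) * (qf 2 ⬝ᵥ crossProduct (qf 0) (qf 1)) * (c 2)⁻¹, ?_, ?_, ?_⟩
    · rw [hXdef 1, hXdef 2, suPhi_bracket, hcrs 1 2, hc12, smul_smul, smul_smul,
        _root_.map_smul, hXq 0, smul_smul]
      congr 1
      simp [dotProduct_smul, hqo]
    · rw [hXdef 2, hXdef 0, suPhi_bracket, hcrs 2 0, hc20, smul_smul, smul_smul,
        _root_.map_smul, hXq 1, smul_smul]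
      congr 1
      simp [dotProduct_smul, hqo]
    · rw [hXdef 0, hXdef 1, suPhi_bracket, hcrs 0 1, hc01, smul_smul, smul_smul,
        _root_.map_smul, hXq 2, smul_smul]
      congr 1
      simp [dotProduct_smul, hqo]
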